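/- The pullback topology is the coarsest among topologies extending those of Y and Z making π + ϖ continuous: if f' : Closed(Y) → Closed(Z) is any admissible map such that π + ϖ : Y +_{f'} Z → X +_f W is continuous, then the identity map Y +_{f'} Z → Y +_{f*} Z is continuous, i.e. f'(A) ⊆ f*(A) for all closed A ⊆ Y. -/
import Mathlib


open Set Topology

variable {X Y : Type*} [TopologicalSpace X] [TopologicalSpace Y]

/-- A map on subsets is *admissible* if it sends closed sets to closed sets,
the empty set to the empty set, and is finitely additive on closed sets. -/
def Admissible (f : Set X → Set Y) : Prop :=
  (∀ A : Set X, IsClosed A → IsClosed (f A)) ∧ f ∅ = ∅ ∧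
    ∀ A B : Set X, IsClosed A → IsClosed B → f (A ∪ B) = f A ∪ f B

/-- The defining condition for a subset of `X ⊕ Y` to be closed in the sum space `X +_f Y`. -/
def SumClosed (f : Set X → Set Y) (A : Set (X ⊕ Y)) : Prop :=
  IsClosed (Sum.inl ⁻¹' A) ∧ IsClosed (Sum.inr ⁻¹' A) ∧
    f (Sum.inl ⁻¹' A) ⊆ Sum.inr ⁻¹' A

theorem Admissible.mono {f : Set X → Set Y} (hf : Admissible f) {A B : Set X}
    (hA : IsClosed A) (hB : IsClosed B) (hAB : A ⊆ B) : f A ⊆ f B := by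
  have h := hf.2.2 A B hA hB
  rw [union_eq_right.mpr hAB] at h
  rw [h]; exact subset_union_left

/-- The sum space `X +_f Y`. -/
def sumTopology (f : Set X → Set Y) (hf : Admissible f) : TopologicalSpace (X ⊕ Y) where
  IsOpen s := SumClosed f sᶜ
  isOpen_univ := by
    refine ⟨?_, ?_, ?_⟩ <;> simp [hf.2.1]
  isOpen_inter := by
    rintro s t ⟨hs1, hs2, hs3⟩ ⟨ht1, ht2, ht3⟩
    refine ⟨?_, ?_, ?_⟩
    · simpa [compl_inter, preimage_union] using hs1.union ht1
    · simpa [compl_inter, preimage_union] using hs2.union ht2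
    · rw [compl_inter, preimage_union, preimage_union, hf.2.2 _ _ hs1 ht1]
      exact union_subset_union hs3 ht3
  isOpen_sUnion := by
    intro S hS
    have hc : (⋃₀ S)ᶜ = ⋂ s ∈ S, sᶜ := by
      rw [compl_sUnion, sInter_image]
    have h1 : IsClosed (Sum.inl ⁻¹' (⋃₀ S)ᶜ) := by
      rw [hc, preimage_iInter₂]
      exact isClosed_biInter fun s hs => (hS s hs).1
    have h2 : IsClosed (Sum.inr ⁻¹' (⋃₀ S)ᶜ) := by
      rw [hc, preimage_iInter₂]
      exact isClosed_biInter fun s hs => (hS s hs).2.1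
    refine ⟨h1, h2, ?_⟩
    rw [hc, preimage_iInter₂, preimage_iInter₂]
    refine subset_iInter₂ fun s hs => ?_
    have h1' : IsClosed (⋂ i ∈ S, Sum.inl ⁻¹' iᶜ) := by
      exact isClosed_biInter fun i hi => (hS i hi).1
    calc f (⋂ i ∈ S, Sum.inl ⁻¹' iᶜ) ⊆ f (Sum.inl ⁻¹' sᶜ) :=
          hf.mono h1' (hS s hs).1 (iInter₂_subset s hs)
      _ ⊆ Sum.inr ⁻¹' sᶜ := (hS s hs).2.2

theorem isClosed_sumTopology {f : Set X → Set Y} (hf : Admissible f) (A : Set (X ⊕ Y)) :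
    IsClosed[sumTopology f hf] A ↔ SumClosed f A := by
  rw [← @isOpen_compl_iff _ _ (sumTopology f hf)]
  show SumClosed f Aᶜᶜ ↔ _
  rw [compl_compl]

/-- the pullback topology is the coarsest one making `π + ϖ` continuous. -/
theorem statement12 {Z W : Type*} [TopologicalSpace Z] [TopologicalSpace W]
    (f : Set X → Set W) (hf : Admissible f)
    (π : Y → X) (ϖ : Z → W) (hπ : Continuous π) (hϖ : Continuous ϖ)
    (hstar : Admissible (fun A : Set Y => ϖ ⁻¹' (f (closure (π '' A)))))
    (f' : Set Y → Set Z) (hf' : Admissible f')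
    (hcont : Continuous[sumTopology f' hf', sumTopology f hf] (Sum.map π ϖ)) :
    Continuous[sumTopology f' hf',
        sumTopology (fun A : Set Y => ϖ ⁻¹' (f (closure (π '' A)))) hstar] id ∧
      ∀ A : Set Y, IsClosed A → f' A ⊆ ϖ ⁻¹' (f (closure (π '' A))) := by
  have key : ∀ A : Set Y, IsClosed A → f' A ⊆ ϖ ⁻¹' (f (closure (π '' A))) := by
    intro A hA
    set C : Set (X ⊕ W) :=
      Sum.inl '' closure (π '' A) ∪ Sum.inr '' f (closure (π '' A)) with hCdef
    have hinl : Sum.inl ⁻¹' C = closure (π '' A) := by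
      ext x; simp [hCdef]
    have hinr : Sum.inr ⁻¹' C = f (closure (π '' A)) := by
      ext x; simp [hCdef]
    have hfc : IsClosed (f (closure (π '' A))) := hf.1 _ isClosed_closure
    have hCclosed : IsClosed[sumTopology f hf] C := by
      rw [isClosed_sumTopology]
      exact ⟨by rw [hinl]; exact isClosed_closure, by rw [hinr]; exact hfc,
        by rw [hinl, hinr]⟩
    have hpre : IsClosed[sumTopology f' hf'] (Sum.map π ϖ ⁻¹' C) := by
      rw [← @isOpen_compl_iff _ _ (sumTopology f' hf'), ← preimage_compl]
      exact (@continuous_def _ _ (sumTopology f' hf') (sumTopology f hf) _).mp hcont _ (by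
        rw [@isOpen_compl_iff _ _ (sumTopology f hf)]; exact hCclosed)
    rw [isClosed_sumTopology] at hpre
    obtain ⟨h1, _, h3⟩ := hpre
    have e1 : Sum.inl ⁻¹' (Sum.map π ϖ ⁻¹' C) = π ⁻¹' closure (π '' A) := by
      rw [← hinl]; rfl
    have e2 : Sum.inr ⁻¹' (Sum.map π ϖ ⁻¹' C) = ϖ ⁻¹' f (closure (π '' A)) := by
      rw [← hinr]; rfl
    rw [e1, e2] at h3
    rw [e1] at h1
    have hsub : A ⊆ π ⁻¹' closure (π '' A) :=
      (subset_preimage_image π A).trans (preimage_mono subset_closure)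
    exact (hf'.mono hA h1 hsub).trans h3
  refine ⟨?_, key⟩
  rw [@continuous_def _ _ (sumTopology f' hf') (sumTopology _ hstar)]
  intro s hs
  have hs' : SumClosed (fun A : Set Y => ϖ ⁻¹' (f (closure (π '' A)))) sᶜ := hs
  show SumClosed f' (id ⁻¹' s)ᶜ
  rw [preimage_id]
  exact ⟨hs'.1, hs'.2.1, (key _ hs'.1).trans hs'.2.2⟩
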